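/- arXiv:2103.07155 — 3 statements merged into one kernel-verified Lean document; each statement's English description precedes it below -/
import Mathlib

section
/- Let (Ω, 𝔽, ℙ) be a probability space, let ε, ε̂, d : Ω → ℝ be random variables (ε the residual, ε̂ its AI-prediction, d the surrogate correction Δf), and set Δε := ε - ε̂. Let α > 0, η₁, η₂ ∈ (0,1], δ₁, δ₂ ∈ (0,1). Assume ε is integrable, ℙ[|Δε| ≥ η₁·|ε|] < δ₁ (weak accuracy) and ℙ[|ε̂ - d| ≥ η₂·|ε|] < δ₂ (weak fidelity). Then ℙ[|ε - d| > α] < ((η₁+η₂)/α)·E[|ε|] + δ₁ + δ₂ + δ₁·δ₂. (Note that Y - (f(x) + Δf(x)) = ε - d, so this bounds the loss in surrogate accuracy due to training error and lack of model fidelity.) -/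
open MeasureTheory

/-- Loss in surrogate accuracy due to training error and lack of model fidelity:
under weak (η₁,δ₁)-accuracy and weak (η₂,δ₂)-fidelity,
ℙ[|ε - d| > α] < ((η₁+η₂)/α)·E[|ε|] + δ₁ + δ₂ + δ₁·δ₂. -/
theorem bapc_surrogate_accuracy
    {Ω : Type*} [MeasurableSpace Ω] (μ : Measure Ω) [IsProbabilityMeasure μ]
    (ε εhat d : Ω → ℝ) (α η₁ η₂ δ₁ δ₂ : ℝ)
    (hα : 0 < α)
    (hη₁ : η₁ ∈ Set.Ioc (0 : ℝ) 1) (hη₂ : η₂ ∈ Set.Ioc (0 : ℝ) 1)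
    (hδ₁ : δ₁ ∈ Set.Ioo (0 : ℝ) 1) (hδ₂ : δ₂ ∈ Set.Ioo (0 : ℝ) 1)
    (hint : Integrable ε μ)
    (hacc : (μ {ω | |ε ω - εhat ω| ≥ η₁ * |ε ω|}).toReal < δ₁)
    (hfid : (μ {ω | |εhat ω - d ω| ≥ η₂ * |ε ω|}).toReal < δ₂) :
    (μ {ω | |ε ω - d ω| > α}).toReal
      < (η₁ + η₂) / α * (∫ ω, |ε ω| ∂μ) + δ₁ + δ₂ + δ₁ * δ₂ := by
  set A := {ω | |ε ω - εhat ω| ≥ η₁ * |ε ω|}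
  set B := {ω | |εhat ω - d ω| ≥ η₂ * |ε ω|}
  have hηsum : 0 < η₁ + η₂ := add_pos hη₁.1 hη₂.1
  set C := {ω | α / (η₁ + η₂) ≤ |ε ω|}
  have hsub : {ω | |ε ω - d ω| > α} ⊆ A ∪ B ∪ C := by
    intro ω hω
    by_cases hA : ω ∈ A
    · exact Or.inl (Or.inl hA)
    by_cases hB : ω ∈ B
    · exact Or.inl (Or.inr hB)
    right
    have h1 : |ε ω - εhat ω| < η₁ * |ε ω| := lt_of_not_ge hA
    have h2 : |εhat ω - d ω| < η₂ * |ε ω| := lt_of_not_ge hB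
    have h3 : |ε ω - d ω| ≤ |ε ω - εhat ω| + |εhat ω - d ω| := by
      have := abs_sub_le (ε ω) (εhat ω) (d ω)
      linarith
    have h4 : α < (η₁ + η₂) * |ε ω| := by
      have := hω.out
      nlinarith
    exact (div_le_iff₀ hηsum).2 (by linarith [mul_comm (η₁ + η₂) (|ε ω|)])
  -- Markov bound on C
  have hintabs : Integrable (fun ω => |ε ω|) μ := hint.abs
  have hmarkov := mul_meas_ge_le_integral_of_nonneg
    (μ := μ) (f := fun ω => |ε ω|)
    (Filter.Eventually.of_forall fun ω => abs_nonneg _) hintabs (α / (η₁ + η₂))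
  have hαη : 0 < α / (η₁ + η₂) := div_pos hα hηsum
  have hC : (μ C).toReal ≤ (η₁ + η₂) / α * (∫ ω, |ε ω| ∂μ) := by
    rw [← le_div_iff₀' hαη] at hmarkov
    calc (μ C).toReal ≤ (∫ ω, |ε ω| ∂μ) / (α / (η₁ + η₂)) := hmarkov
    _ = (η₁ + η₂) / α * (∫ ω, |ε ω| ∂μ) := by
        field_simp
  have hfin : ∀ s : Set Ω, μ s ≠ ⊤ := fun s => (measure_lt_top μ s).ne
  have hle : μ {ω | |ε ω - d ω| > α} ≤ μ A + μ B + μ C :=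
    (measure_mono hsub).trans ((measure_union_le _ _).trans
      (add_le_add (measure_union_le _ _) le_rfl))
  have hle' : (μ {ω | |ε ω - d ω| > α}).toReal ≤ (μ A).toReal + (μ B).toReal + (μ C).toReal := by
    have := ENNReal.toReal_mono (by
      simp [ENNReal.add_ne_top, hfin]) hle
    rwa [ENNReal.toReal_add (ENNReal.add_ne_top.2 ⟨hfin A, hfin B⟩) (hfin C),
      ENNReal.toReal_add (hfin A) (hfin B)] at this
  have hδδ : 0 < δ₁ * δ₂ := mul_pos hδ₁.1 hδ₂.1
  linarith
end

section
/- Let ε, ε̂, d : Ω → ℝ be random variables on a probability space with Δε := ε - ε̂, and let η₁, η₂ ∈ (0,1], δ₁, δ₂ ∈ (0,1), α > 0. If ℙ[|Δε| ≥ η₁·|ε|] < δ₁ and ℙ[|ε̂ - d| ≥ η₂·|ε|] < δ₂, then ℙ[|ε̂ - d| + |Δε| > α] < ℙ[(η₁+η₂)·|ε| > α] + δ₁ + δ₂. -/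
open MeasureTheory

/-- Key intermediate step in the BAPC surrogate-accuracy theorem:
splitting on the events {|Δε| ≥ η₁|ε|} and {|ε̂ - d| ≥ η₂|ε|} gives the union bound
ℙ[|ε̂ - d| + |Δε| > α] < ℙ[(η₁+η₂)·|ε| > α] + δ₁ + δ₂. -/
theorem bapc_union_bound_step
    {Ω : Type*} [MeasurableSpace Ω] (μ : Measure Ω) [IsProbabilityMeasure μ]
    (ε εhat d : Ω → ℝ) (α η₁ η₂ δ₁ δ₂ : ℝ)
    (hα : 0 < α)
    (hη₁ : η₁ ∈ Set.Ioc (0 : ℝ) 1) (hη₂ : η₂ ∈ Set.Ioc (0 : ℝ) 1)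
    (hδ₁ : δ₁ ∈ Set.Ioo (0 : ℝ) 1) (hδ₂ : δ₂ ∈ Set.Ioo (0 : ℝ) 1)
    (hacc : (μ {ω | |ε ω - εhat ω| ≥ η₁ * |ε ω|}).toReal < δ₁)
    (hfid : (μ {ω | |εhat ω - d ω| ≥ η₂ * |ε ω|}).toReal < δ₂) :
    (μ {ω | |εhat ω - d ω| + |ε ω - εhat ω| > α}).toReal
      < (μ {ω | (η₁ + η₂) * |ε ω| > α}).toReal + δ₁ + δ₂ := by
  set S := {ω | |εhat ω - d ω| + |ε ω - εhat ω| > α}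
  set C := {ω | (η₁ + η₂) * |ε ω| > α}
  set A := {ω | |ε ω - εhat ω| ≥ η₁ * |ε ω|}
  set B := {ω | |εhat ω - d ω| ≥ η₂ * |ε ω|}
  have hsub : S ⊆ C ∪ (A ∪ B) := by
    intro ω hω
    by_cases hA : ω ∈ A
    · exact Or.inr (Or.inl hA)
    by_cases hB : ω ∈ B
    · exact Or.inr (Or.inr hB)
    left
    have h1 : |ε ω - εhat ω| < η₁ * |ε ω| := lt_of_not_ge hA
    have h2 : |εhat ω - d ω| < η₂ * |ε ω| := lt_of_not_ge hB
    have := hω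
    simp only [S, C, Set.mem_setOf_eq] at this ⊢
    nlinarith
  have hle : μ S ≤ μ C + (μ A + μ B) :=
    le_trans (measure_mono hsub)
      (le_trans (measure_union_le _ _)
        (add_le_add_right (measure_union_le _ _) _))
  have hC := measure_ne_top μ C
  have hA' := measure_ne_top μ A
  have hB' := measure_ne_top μ B
  have := ENNReal.toReal_mono (by finiteness) hle
  rw [ENNReal.toReal_add hC (by finiteness), ENNReal.toReal_add hA' hB'] at this
  linarith
end

section
/- Let D be a nonnegative real-valued integrable random variable with cumulative distribution function F, and let 0 < c < p. Define the expected profit G(q) = p·E[min(D, q)] - c·q for q ≥ 0. Then any q* ≥ 0 satisfying F(q*) = 1 - c/p maximizes G; that is, for all q ≥ 0, G(q) ≤ G(q*). (q* = F⁻¹(1 - c/p) is the critical fractile of the newsvendor problem.) -/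
open MeasureTheory

/-- Newsvendor critical fractile: for a nonnegative integrable demand `D` with CDF `F`
and `0 < c < p`, any `q* ≥ 0` with `F(q*) = 1 - c/p` maximizes the expected profit
`G(q) = p·E[min(D, q)] - c·q` over all `q ≥ 0`. -/
theorem newsvendor_critical_fractile
    {Ω : Type*} [MeasurableSpace Ω] (μ : Measure Ω) [IsProbabilityMeasure μ]
    (D : Ω → ℝ) (hD : Measurable D) (hD0 : ∀ ω, 0 ≤ D ω)
    (hDint : Integrable D μ)
    (p c : ℝ) (hc : 0 < c) (hcp : c < p)
    (F : ℝ → ℝ) (hF : ∀ x, F x = (μ {ω | D ω ≤ x}).toReal)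
    (G : ℝ → ℝ) (hG : ∀ q, G q = p * (∫ ω, min (D ω) q ∂μ) - c * q)
    (qstar : ℝ) (hq0 : 0 ≤ qstar) (hfrac : F qstar = 1 - c / p) :
    ∀ q, 0 ≤ q → G q ≤ G qstar := by
  intro q hq
  have hp : 0 < p := hc.trans hcp
  set s : Set Ω := {ω | qstar < D ω} with hs
  have hsm : MeasurableSet s := measurableSet_lt measurable_const hD
  have hcompl : sᶜ = {ω | D ω ≤ qstar} := by
    ext ω; simp [hs, not_lt]
  have hms : (μ s).toReal = c / p := by
    have h1 : (μ sᶜ).toReal = 1 - c / p := by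
      rw [hcompl, ← hF, hfrac]
    have h2 : μ sᶜ = 1 - μ s := prob_compl_eq_one_sub hsm
    have hle : μ s ≤ 1 := by
      exact prob_le_one
    have h3 : (μ sᶜ).toReal = 1 - (μ s).toReal := by
      rw [h2, ENNReal.toReal_sub_of_le hle (by simp)]
      simp
    have : 1 - (μ s).toReal = 1 - c / p := by rw [← h3, h1]
    linarith
  -- integrability
  have hint : ∀ r : ℝ, Integrable (fun ω => min (D ω) r) μ :=
    fun r => hDint.inf (integrable_const r)
  have hindint : Integrable (s.indicator (fun _ => q - qstar)) μ :=
    (integrable_const (q - qstar)).indicator hsm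
  -- pointwise bound
  have hpt : ∀ ω, min (D ω) q - min (D ω) qstar ≤
      s.indicator (fun _ => q - qstar) ω := by
    intro ω
    by_cases hωs : ω ∈ s
    · have hgt : qstar < D ω := hωs
      rw [Set.indicator_of_mem hωs]
      have : min (D ω) q ≤ q := min_le_right _ _
      have : min (D ω) qstar = qstar := min_eq_right hgt.le
      rcases le_or_gt (D ω) q with h | h
      · rcases le_or_gt (D ω) qstar with h' | h'
        · simp [min_eq_left h, min_eq_left h']; linarith
        · simp [min_eq_left h, min_eq_right h'.le]; linarith [min_le_right (D ω) q]
      · simp [min_eq_right h.le, min_eq_right hgt.le]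
    · have hle : D ω ≤ qstar := not_lt.mp hωs
      rw [Set.indicator_of_notMem hωs]
      rw [min_eq_left hle]
      rcases le_or_gt (D ω) q with h | h
      · simp [min_eq_left h]
      · rw [min_eq_right h.le]; linarith
  -- integrate
  have hintineq : ∫ ω, (min (D ω) q - min (D ω) qstar) ∂μ ≤
      ∫ ω, s.indicator (fun _ => q - qstar) ω ∂μ :=
    integral_mono ((hint q).sub (hint qstar)) hindint hpt
  have hindval : ∫ ω, s.indicator (fun _ => q - qstar) ω ∂μ
      = (q - qstar) * (c / p) := by
    rw [integral_indicator_const _ hsm]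
    simp [hms, mul_comm]
    rw [show μ.real s = c / p from hms]; ring
  have hsubval : ∫ ω, (min (D ω) q - min (D ω) qstar) ∂μ
      = (∫ ω, min (D ω) q ∂μ) - ∫ ω, min (D ω) qstar ∂μ :=
    integral_sub (hint q) (hint qstar)
  have key : (∫ ω, min (D ω) q ∂μ) - (∫ ω, min (D ω) qstar ∂μ)
      ≤ (q - qstar) * (c / p) := by
    rw [← hsubval, ← hindval]; exact hintineq
  rw [hG q, hG qstar]
  have hpc : p * ((q - qstar) * (c / p)) = c * (q - qstar) := by
    field_simp
  nlinarith [mul_le_mul_of_nonneg_left key hp.le]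
end
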